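/- Fix λ > 0 and r > 0, and let f(t) = (1/√π)·exp(−r² e^t − e^{−t}/(4λ²) + t/2). Then the Fourier transform of f with respect to t, defined as f̂(k) = ∫_{−∞}^∞ f(t) e^{−2πikt} dt, equals (2/√π)·(2λr)^{−1/2 + 2πik}·K_{1/2 − 2πik}(r/λ), where K_ν(x) = (x^ν/2^{ν+1}) ∫_0^∞ e^{−s − x²/(4s)} s^{−(ν+1)} ds is the modified Bessel function of the second kind extended to complex order ν. -/

import Mathlib

open Real MeasureTheory Complex

/-- The modified Bessel function of the second kind with (complex) order `ν`,
`K_ν(x) = (x^ν/2^{ν+1}) ∫_0^∞ e^{−s − x²/(4s)} s^{−(ν+1)} ds`. -/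
noncomputable def Kbessel (ν : ℂ) (x : ℝ) : ℂ :=
  (x : ℂ) ^ ν / 2 ^ (ν + 1) *
    ∫ s in Set.Ioi (0 : ℝ), Complex.exp (-(s : ℂ) - (x : ℂ) ^ 2 / (4 * s)) * (s : ℂ) ^ (-(ν + 1))

lemma cpow_ofReal_pos_ne_zero {a : ℝ} (ha : 0 < a) (w : ℂ) : ((a : ℝ) : ℂ) ^ w ≠ 0 := by
  intro h
  rw [Complex.cpow_eq_zero_iff] at h
  exact_mod_cast ha.ne' (by exact_mod_cast h.1)

/-- `(e^t)^w = exp (t*w)` as complex powers. -/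
lemma ofReal_exp_cpow (t : ℝ) (w : ℂ) :
    ((Real.exp t : ℝ) : ℂ) ^ w = Complex.exp (t * w) := by
  rw [Complex.cpow_def_of_ne_zero (by exact_mod_cast (Real.exp_pos t).ne'),
    ← Complex.ofReal_log (Real.exp_pos t).le, Real.log_exp]

/-- Fourier transform (in `t`) of `f(t) = (1/√π)·exp(−r² e^t − e^{−t}/(4λ²) + t/2)`:
`f̂(k) = (2/√π)·(2λr)^{−1/2 + 2πik}·K_{1/2 − 2πik}(r/λ)`. -/
theorem fourier_transform_f (lam r : ℝ) (hlam : 0 < lam) (hr : 0 < r) (k : ℝ) :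
    (∫ t : ℝ,
        ((1 / Real.sqrt π *
            Real.exp (-(r ^ 2 * Real.exp t) - Real.exp (-t) / (4 * lam ^ 2) + t / 2) : ℝ) : ℂ) *
          Complex.exp (-(2 * (π : ℂ) * Complex.I * (k : ℂ) * (t : ℂ)))) =
      2 / (Real.sqrt π : ℂ) *
        ((2 * lam * r : ℝ) : ℂ) ^ ((-1 / 2 : ℂ) + 2 * (π : ℂ) * Complex.I * (k : ℂ)) *
        Kbessel (1 / 2 - 2 * (π : ℂ) * Complex.I * (k : ℂ)) (r / lam) := by
  set ν : ℂ := 1 / 2 - 2 * (π : ℂ) * Complex.I * (k : ℂ) with hν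
  set c : ℝ := 1 / (4 * lam ^ 2) with hc
  have hc0 : 0 < c := by positivity
  set x : ℝ := r / lam with hx
  have hx0 : 0 < x := by positivity
  -- the map and its properties
  set φ : ℝ → ℝ := fun t => Real.exp (-t) * c with hφ
  have hφ0 : ∀ t, 0 < φ t := fun t => by positivity
  have hφ' : ∀ t, HasDerivAt φ (-(Real.exp (-t) * c)) t := by
    intro t
    have h1 : HasDerivAt (fun t : ℝ => Real.exp (-t)) (-Real.exp (-t)) t := by
      simpa using (hasDerivAt_neg t).exp
    simpa [neg_mul] using h1.mul_const c
  have hinj : Set.InjOn φ Set.univ := by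
    intro a _ b _ hab
    have h1 : Real.exp (-a) = Real.exp (-b) := mul_right_cancel₀ hc0.ne' hab
    have := Real.exp_injective h1
    linarith
  have himg : φ '' Set.univ = Set.Ioi (0 : ℝ) := by
    ext s
    simp only [Set.image_univ, Set.mem_range, Set.mem_Ioi]
    constructor
    · rintro ⟨t, rfl⟩; exact hφ0 t
    · intro hs
      refine ⟨-Real.log (s / c), ?_⟩
      simp only [hφ, neg_neg, Real.exp_log (by positivity : 0 < s / c)]
      field_simp
  -- the target integrand on `(0,∞)`
  set G : ℝ → ℂ := fun s =>
    (1 / Real.sqrt π : ℂ) * ((c : ℝ) : ℂ) ^ ν *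
      (Complex.exp (-(s : ℂ) - (x : ℂ) ^ 2 / (4 * s)) * (s : ℂ) ^ (-(ν + 1))) with hG
  have key : (∫ t : ℝ,
        ((1 / Real.sqrt π *
            Real.exp (-(r ^ 2 * Real.exp t) - Real.exp (-t) / (4 * lam ^ 2) + t / 2) : ℝ) : ℂ) *
          Complex.exp (-(2 * (π : ℂ) * Complex.I * (k : ℂ) * (t : ℂ)))) =
      ∫ s in Set.Ioi (0 : ℝ), G s := by
    rw [← himg,
      integral_image_eq_integral_abs_deriv_smul MeasurableSet.univ
        (fun t _ => (hφ' t).hasDerivWithinAt) hinj G,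
      Measure.restrict_univ]
    apply integral_congr_ae
    filter_upwards with t
    have hst : 0 < φ t := hφ0 t
    have hsne : ((φ t : ℝ) : ℂ) ≠ 0 := by exact_mod_cast hst.ne'
    -- |φ' t| = φ t
    rw [abs_neg, abs_of_pos hst]
    -- rewrite smul as mul
    rw [real_smul]
    -- key pointwise computation
    have hre : x ^ 2 / (4 * φ t) = r ^ 2 * Real.exp t := by
      simp only [hφ, hx, hc, Real.exp_neg]
      field_simp
    have hxx : ((x : ℂ)) ^ 2 / (4 * (φ t : ℂ)) = ((r ^ 2 * Real.exp t : ℝ) : ℂ) := by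
      rw [← hre]
      push_cast
      ring
    have hceq : Real.exp t * φ t = c := by
      simp only [hφ]
      rw [← mul_assoc, ← Real.exp_add]
      simp
    have h1 : ((φ t : ℝ) : ℂ) ^ (-ν) = ((φ t : ℝ) : ℂ) ^ (-(ν + 1)) * (φ t : ℂ) := by
      rw [show -ν = -(ν + 1) + 1 by ring, Complex.cpow_add _ _ hsne, Complex.cpow_one]
    have hpow : ((c : ℝ) : ℂ) ^ ν * ((φ t : ℝ) : ℂ) ^ (-(ν + 1)) * (φ t : ℂ) =
        Complex.exp (t * ν) := by
      rw [mul_assoc, ← h1, ← hceq, Complex.cpow_neg, Complex.ofReal_mul,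
        Complex.mul_cpow_ofReal_nonneg (Real.exp_pos t).le hst.le, ofReal_exp_cpow]
      rw [mul_assoc, mul_inv_cancel₀ (cpow_ofReal_pos_ne_zero hst ν), mul_one]
    calc ((1 / Real.sqrt π *
            Real.exp (-(r ^ 2 * Real.exp t) - Real.exp (-t) / (4 * lam ^ 2) + t / 2) : ℝ) : ℂ) *
          Complex.exp (-(2 * (π : ℂ) * Complex.I * (k : ℂ) * (t : ℂ)))
        = (1 / Real.sqrt π : ℂ) *
            (Complex.exp (((-(r ^ 2 * Real.exp t) - Real.exp (-t) / (4 * lam ^ 2) + t / 2 : ℝ) : ℂ))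
              * Complex.exp (-(2 * (π : ℂ) * Complex.I * (k : ℂ) * (t : ℂ)))) := by
          push_cast [Complex.ofReal_exp]; ring
      _ = (1 / Real.sqrt π : ℂ) *
            (Complex.exp (-(φ t : ℂ) - (x : ℂ) ^ 2 / (4 * (φ t : ℂ))) * Complex.exp (t * ν)) := by
          rw [← Complex.exp_add, ← Complex.exp_add]
          congr 1
          rw [hxx]
          have hφc : ((φ t : ℝ) : ℂ) = ((Real.exp (-t) / (4 * lam ^ 2) : ℝ) : ℂ) := by
            norm_cast; simp [hφ, hc]; ring
          rw [hφc]
          push_cast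
          simp only [hν]
          ring
      _ = (φ t : ℂ) * G (φ t) := by
          simp only [hG]
          rw [← hpow]
          ring
  rw [key]
  -- pull constants out and match with `Kbessel`
  have hInt : (∫ s in Set.Ioi (0 : ℝ), G s) =
      (1 / Real.sqrt π : ℂ) * ((c : ℝ) : ℂ) ^ ν *
        ∫ s in Set.Ioi (0 : ℝ),
          Complex.exp (-(s : ℂ) - (x : ℂ) ^ 2 / (4 * s)) * (s : ℂ) ^ (-(ν + 1)) := by
    simp only [hG]
    rw [integral_const_mul]
  rw [hInt, Kbessel]
  set J : ℂ := ∫ s in Set.Ioi (0 : ℝ),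
      Complex.exp (-(s : ℂ) - (x : ℂ) ^ 2 / (4 * s)) * (s : ℂ) ^ (-(ν + 1)) with hJ
  have hsqrt : (Real.sqrt π : ℂ) ≠ 0 := by
    exact_mod_cast (Real.sqrt_pos.mpr Real.pi_pos).ne'
  have hexp : (-1 / 2 : ℂ) + 2 * (π : ℂ) * Complex.I * (k : ℂ) = -ν := by
    rw [hν]; ring
  rw [hexp]
  -- reduce to an identity between the constants
  have h3 : ((c * (2 * lam * r) : ℝ) : ℂ) ^ ν = ((c : ℝ) : ℂ) ^ ν * ((2 * lam * r : ℝ) : ℂ) ^ ν := by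
    rw [Complex.ofReal_mul, Complex.mul_cpow_ofReal_nonneg hc0.le (by positivity)]
  have h4 : ((c * (2 * lam * r) * 2 : ℝ) : ℂ) ^ ν
      = ((c * (2 * lam * r) : ℝ) : ℂ) ^ ν * ((2 : ℝ) : ℂ) ^ ν := by
    rw [Complex.ofReal_mul, Complex.mul_cpow_ofReal_nonneg (by positivity) (by norm_num)]
  have hkey : ((c : ℝ) : ℂ) ^ ν * (((2 * lam * r : ℝ)) : ℂ) ^ ν * ((2 : ℝ) : ℂ) ^ ν
      = ((x : ℝ) : ℂ) ^ ν := by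
    rw [← h3, ← h4]
    congr 1
    norm_cast
    rw [hc, hx]
    field_simp
    ring
  have h2 : ((2 : ℂ)) ^ (ν + 1) = ((2 : ℝ) : ℂ) ^ ν * 2 := by
    rw [Complex.cpow_add _ _ (by norm_num), Complex.cpow_one]; norm_num
  have hne1 := cpow_ofReal_pos_ne_zero (show (0:ℝ) < 2 * lam * r by positivity) ν
  have hne2 := cpow_ofReal_pos_ne_zero (show (0:ℝ) < 2 by norm_num) ν
  rw [Complex.cpow_neg, h2, ← hkey]
  generalize hB : (((2 * lam * r : ℝ)) : ℂ) ^ ν = B at hne1 ⊢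
  generalize hC : ((2 : ℝ) : ℂ) ^ ν = C at hne2 ⊢
  field_simp
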